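/- For every n ≥ 5, the graph G_n obtained from a complete graph on n−1 vertices by adding a new vertex v joined by edges to exactly three vertices of the complete graph has no orientation of diameter two. -/

import Mathlib

/-- `D` is an orientation of the simple graph `G`: every arc lies on an edge of `G`,
and every edge of `G` gets exactly one direction. -/
def IsOrientation {V : Type*} (G : SimpleGraph V) (D : V → V → Prop) : Prop :=
  (∀ u v, D u v → G.Adj u v) ∧ (∀ u v, G.Adj u v → (D u v ↔ ¬ D v u))

/-- The directed distance from `u` to `v` in the digraph `D` is at most 2. -/
def DistLE2 {V : Type*} (D : V → V → Prop) (u v : V) : Prop :=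
  D u v ∨ ∃ w, D u w ∧ D w v

/-- `D` is an orientation of the subgraph of `G` induced by `W`. -/
def IsOrientationOn {V : Type*} (G : SimpleGraph V) (W : Set V) (D : V → V → Prop) : Prop :=
  (∀ u v, D u v → u ∈ W ∧ v ∈ W ∧ G.Adj u v) ∧
  (∀ u v, u ∈ W → v ∈ W → G.Adj u v → (D u v ↔ ¬ D v u))

private lemma key_lemma {n : ℕ} (hn : 5 ≤ n) (G : SimpleGraph (Fin n))
    (hG : ∀ u v : Fin n, G.Adj u v ↔ u ≠ v ∧
      (((u : ℕ) < n - 1 ∧ (v : ℕ) < n - 1) ∨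
       ((u : ℕ) = n - 1 ∧ (v : ℕ) < 3) ∨ ((v : ℕ) = n - 1 ∧ (u : ℕ) < 3)))
    (D : Fin n → Fin n → Prop)
    (hadj : ∀ u w, D u w → G.Adj u w)
    (hanti : ∀ u w, D u w → ¬ D w u)
    (hdist : ∀ u w, u ≠ w → DistLE2 D u w)
    (x : Fin n) (hx : (x : ℕ) < 3)
    (hone : ∀ w, D ⟨n - 1, by omega⟩ w → w = x) : False := by
  have hv : ((⟨n - 1, by omega⟩ : Fin n) : ℕ) = n - 1 := rfl
  -- x dominates every clique vertex other than itself
  have hdom : ∀ u : Fin n, (u : ℕ) < n - 1 → u ≠ x → D x u := by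
    intro u hu hux
    have hvu : (⟨n - 1, by omega⟩ : Fin n) ≠ u := by
      intro h
      have : (u : ℕ) = n - 1 := by rw [← h]
      omega
    rcases hdist _ u hvu with h | ⟨w, h1, h2⟩
    · exact absurd (hone u h) hux
    · rw [hone w h1] at h2; exact h2
  have hu0lt : (3 : ℕ) < n := by omega
  have hu0x : (⟨3, hu0lt⟩ : Fin n) ≠ x := by
    intro h
    have : ((⟨3, hu0lt⟩ : Fin n) : ℕ) = (x : ℕ) := by rw [h]
    simp at this; omega
  have hxu0 : D x ⟨3, hu0lt⟩ := hdom _ (by simp; omega) hu0x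
  rcases hdist ⟨3, hu0lt⟩ x hu0x with h | ⟨w, h1, h2⟩
  · exact hanti x _ hxu0 h
  · have hwx : w ≠ x := ((hG w x).mp (hadj w x h2)).1
    have hwlt : (w : ℕ) < n := w.isLt
    rcases (by omega : (w : ℕ) < n - 1 ∨ (w : ℕ) = n - 1) with hw | hw
    · exact hanti w x h2 (hdom w hw hwx)
    · have hwv : w = (⟨n - 1, by omega⟩ : Fin n) := Fin.ext hw
      rw [hwv] at h1
      have := (hG _ _).mp (hadj _ _ h1)
      rcases this with ⟨_, h | h | h⟩
      · have h2 := h.2; rw [hv] at h2; omega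
      · have h2 := h.1; simp at h2; omega
      · have h2 := h.2; simp at h2

/-- For every `n ≥ 5`, the graph obtained from `K_{n-1}` by adding a vertex joined
to exactly three clique vertices has no orientation of diameter two. -/
theorem stmt0 (n : ℕ) (hn : 5 ≤ n) (G : SimpleGraph (Fin n))
    (hG : ∀ u v : Fin n, G.Adj u v ↔ u ≠ v ∧
      (((u : ℕ) < n - 1 ∧ (v : ℕ) < n - 1) ∨
       ((u : ℕ) = n - 1 ∧ (v : ℕ) < 3) ∨ ((v : ℕ) = n - 1 ∧ (u : ℕ) < 3))) :
    ¬ ∃ D : Fin n → Fin n → Prop, IsOrientation G D ∧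
      ∀ u v, u ≠ v → DistLE2 D u v := by
  rintro ⟨D, ⟨hD1, hD2⟩, hdist⟩
  have hanti : ∀ u w, D u w → ¬ D w u := fun u w h => (hD2 u w (hD1 u w h)).mp h
  have hv : n - 1 < n := by omega
  set v : Fin n := ⟨n - 1, hv⟩ with hvdef
  have a0lt : (0 : ℕ) < n := by omega
  have a1lt : (1 : ℕ) < n := by omega
  have a2lt : (2 : ℕ) < n := by omega
  set a0 : Fin n := ⟨0, a0lt⟩ with ha0
  set a1 : Fin n := ⟨1, a1lt⟩ with ha1
  set a2 : Fin n := ⟨2, a2lt⟩ with ha2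
  have hvval : (v : ℕ) = n - 1 := rfl
  -- out-neighbors of v have value < 3
  have hvw3 : ∀ w, D v w → (w : ℕ) < 3 := by
    intro w h
    rcases (hG v w).mp (hD1 v w h) with ⟨hne, h | h | h⟩
    · rw [hvval] at h; omega
    · exact h.2
    · rw [hvval] at h; omega
  have hwv3 : ∀ w, D w v → (w : ℕ) < 3 := by
    intro w h
    rcases (hG w v).mp (hD1 w v h) with ⟨hne, h | h | h⟩
    · have := h.2; rw [hvval] at this; omega
    · have := h.2; rw [hvval] at this; omega
    · exact h.2
  have hmem : ∀ w : Fin n, (w : ℕ) < 3 → w = a0 ∨ w = a1 ∨ w = a2 := by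
    intro w h
    rcases (by omega : (w : ℕ) = 0 ∨ (w : ℕ) = 1 ∨ (w : ℕ) = 2) with h | h | h
    · exact Or.inl (Fin.ext h)
    · exact Or.inr (Or.inl (Fin.ext h))
    · exact Or.inr (Or.inr (Fin.ext h))
  have hdist' : ∀ u w : Fin n, u ≠ w → DistLE2 (fun a b => D b a) u w := by
    intro u w h
    rcases hdist w u h.symm with h1 | ⟨m, h1, h2⟩
    · exact Or.inl h1
    · exact Or.inr ⟨m, h2, h1⟩
  have hadj' : ∀ u w : Fin n, D w u → G.Adj u w := fun u w h => (hD1 w u h).symm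
  have hanti' : ∀ u w : Fin n, D w u → ¬ D u w := fun u w h => hanti w u h
  have solve : ∀ x : Fin n, (x : ℕ) < 3 → (∀ w, D v w → w = x) → False :=
    fun x hx hone => key_lemma hn G hG D hD1 hanti hdist x hx hone
  have solve' : ∀ x : Fin n, (x : ℕ) < 3 → (∀ w, D w v → w = x) → False :=
    fun x hx hone =>
      key_lemma hn G hG (fun a b => D b a) hadj' hanti' hdist' x hx hone
  by_cases h0 : D v a0 <;> by_cases h1 : D v a1 <;> by_cases h2 : D v a2
  · refine solve' a0 (by simp [ha0]) fun w hw => ?_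
    rcases hmem w (hwv3 w hw) with rfl | rfl | rfl
    exacts [rfl, absurd hw (hanti _ _ h1), absurd hw (hanti _ _ h2)]
  · refine solve' a2 (by simp [ha2]) fun w hw => ?_
    rcases hmem w (hwv3 w hw) with rfl | rfl | rfl
    exacts [absurd hw (hanti _ _ h0), absurd hw (hanti _ _ h1), rfl]
  · refine solve' a1 (by simp [ha1]) fun w hw => ?_
    rcases hmem w (hwv3 w hw) with rfl | rfl | rfl
    exacts [absurd hw (hanti _ _ h0), rfl, absurd hw (hanti _ _ h2)]
  · refine solve a0 (by simp [ha0]) fun w hw => ?_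
    rcases hmem w (hvw3 w hw) with rfl | rfl | rfl
    exacts [rfl, absurd hw h1, absurd hw h2]
  · refine solve' a0 (by simp [ha0]) fun w hw => ?_
    rcases hmem w (hwv3 w hw) with rfl | rfl | rfl
    exacts [rfl, absurd hw (hanti _ _ h1), absurd hw (hanti _ _ h2)]
  · refine solve a1 (by simp [ha1]) fun w hw => ?_
    rcases hmem w (hvw3 w hw) with rfl | rfl | rfl
    exacts [absurd hw h0, rfl, absurd hw h2]
  · refine solve a2 (by simp [ha2]) fun w hw => ?_
    rcases hmem w (hvw3 w hw) with rfl | rfl | rfl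
    exacts [absurd hw h0, absurd hw h1, rfl]
  · refine solve a0 (by simp [ha0]) fun w hw => ?_
    rcases hmem w (hvw3 w hw) with rfl | rfl | rfl
    exacts [rfl, absurd hw h1, absurd hw h2]
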